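/- Let n ≥ 5 and let A = [a_ij] be the n×n (0,1)-matrix of the loopy star: a_{1j} = a_{j1} = 1 for all j = 1,…,n, a_{ii} = 1 for all i = 1,…,n, and a_ij = 0 for all i ≠ j with i, j ≥ 2. Then there is no RCDS doubly stochastic matrix X with ξ(X) = ξ(A); that is, A is not the pattern of an RCDS doubly stochastic matrix. -/

import Mathlib

/-- `X` is doubly stochastic. -/
def DoublyStochastic {n : ℕ} (X : Matrix (Fin n) (Fin n) ℝ) : Prop :=
  (∀ i j, 0 ≤ X i j) ∧ (∀ i, ∑ j, X i j = 1) ∧ (∀ j, ∑ i, X i j = 1)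

/-- `X` has restricted constant diagonal sums. -/
def RCDS {n : ℕ} (X : Matrix (Fin n) (Fin n) ℝ) : Prop :=
  ∀ σ τ : Equiv.Perm (Fin n), (∀ i, 0 < X i (σ i)) → (∀ i, 0 < X i (τ i)) →
    ∑ i, X i (σ i) = ∑ i, X i (τ i)

/-- For `n ≥ 5`, the loopy star pattern (ones exactly on the first row, the
first column, and the main diagonal) is not the pattern of an RCDS doubly
stochastic matrix. -/
theorem loopy_star_not_rcds (n : ℕ) (hn : 5 ≤ n)
    (A : Matrix (Fin n) (Fin n) ℝ)
    (hA : ∀ i j, A i j = if (i = j ∨ (i : ℕ) = 0 ∨ (j : ℕ) = 0) then 1 else 0) :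
    ¬ ∃ X : Matrix (Fin n) (Fin n) ℝ, DoublyStochastic X ∧ RCDS X ∧
        (∀ i j, X i j = 0 ↔ A i j = 0) := by
  haveI : NeZero n := ⟨by omega⟩
  rintro ⟨X, ⟨hpos, hrow, hcol⟩, hrcds, hpat⟩
  -- positivity on the pattern
  have hppos : ∀ i j : Fin n, (i = j ∨ (i : ℕ) = 0 ∨ (j : ℕ) = 0) → 0 < X i j := by
    intro i j h
    refine (hpos i j).lt_of_ne' fun he => ?_
    have := (hpat i j).1 he
    rw [hA] at this
    rw [if_pos h] at this; norm_num at this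
  -- zero off the pattern
  have hz : ∀ i j : Fin n, i ≠ j → i ≠ 0 → j ≠ 0 → X i j = 0 := by
    intro i j hij hi hj
    apply (hpat i j).2
    rw [hA, if_neg]
    push_neg
    exact ⟨hij, by simpa using hi, by simpa using hj⟩
  have h0 : ∀ i : Fin n, i = 0 ↔ (i : ℕ) = 0 := fun i => by simp
  set a := X 0 0 with ha
  have hapos : 0 < a := hppos 0 0 (Or.inl rfl)
  -- key consequence of RCDS for each k ≠ 0
  have key : ∀ k : Fin n, k ≠ 0 → X 0 k = (1 + a) / 3 := by
    intro k hk0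
    have hswap : ∀ i : Fin n, 0 < X i (Equiv.swap 0 k i) := by
      intro i
      rcases eq_or_ne i 0 with rfl | hi
      · rw [Equiv.swap_apply_left]; exact hppos 0 k (Or.inr (Or.inl rfl))
      rcases eq_or_ne i k with rfl | hik
      · rw [Equiv.swap_apply_right]; exact hppos i 0 (Or.inr (Or.inr rfl))
      · rw [Equiv.swap_apply_of_ne_of_ne hi hik]; exact hppos i i (Or.inl rfl)
    have hid : ∀ i : Fin n, 0 < X i ((1 : Equiv.Perm (Fin n)) i) := fun i =>
      hppos i i (Or.inl rfl)
    have heq := hrcds (Equiv.swap 0 k) 1 hswap hid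
    simp only [Equiv.Perm.one_apply] at heq
    have hdiff : ∑ i, (X i (Equiv.swap 0 k i) - X i i)
        = (X 0 k - X 0 0) + (X k 0 - X k k) := by
      rw [← Finset.sum_subset (Finset.subset_univ ({0, k} : Finset (Fin n)))
        (fun x _ hx => ?_), Finset.sum_pair (Ne.symm hk0)]
      · rw [Equiv.swap_apply_left, Equiv.swap_apply_right]
      · simp only [Finset.mem_insert, Finset.mem_singleton] at hx
        push_neg at hx
        rw [Equiv.swap_apply_of_ne_of_ne hx.1 hx.2, sub_self]
    rw [Finset.sum_sub_distrib, heq, sub_self] at hdiff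
    -- row k sum
    have hrk : X k 0 + X k k = 1 := by
      have h := hrow k
      rw [← Finset.sum_subset (Finset.subset_univ ({0, k} : Finset (Fin n)))
        (fun x _ hx => ?_), Finset.sum_pair (Ne.symm hk0)] at h
      · exact h
      · simp only [Finset.mem_insert, Finset.mem_singleton] at hx
        push_neg at hx
        exact hz k x (Ne.symm hx.2) hk0 hx.1
    -- column k sum
    have hck : X 0 k + X k k = 1 := by
      have h := hcol k
      rw [← Finset.sum_subset (Finset.subset_univ ({0, k} : Finset (Fin n)))
        (fun x _ hx => ?_), Finset.sum_pair (Ne.symm hk0)] at h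
      · exact h
      · simp only [Finset.mem_insert, Finset.mem_singleton] at hx
        push_neg at hx
        exact hz x k hx.2 hx.1 hk0
    linarith
  -- row 0 sum
  have h0row : a + ∑ j ∈ Finset.univ.erase (0 : Fin n), X 0 j = 1 := by
    rw [Finset.add_sum_erase _ _ (Finset.mem_univ _)]
    exact hrow 0
  have hconst : ∑ j ∈ Finset.univ.erase (0 : Fin n), X 0 j
      = (n - 1 : ℕ) * ((1 + a) / 3) := by
    rw [Finset.sum_congr rfl (fun j hj => key j (Finset.ne_of_mem_erase hj)),
      Finset.sum_const, Finset.card_erase_of_mem (Finset.mem_univ _),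
      Finset.card_univ, Fintype.card_fin, nsmul_eq_mul]
  have hcast : ((n - 1 : ℕ) : ℝ) = (n : ℝ) - 1 := by
    rw [Nat.cast_sub (by omega)]; simp
  have hn5 : (5 : ℝ) ≤ (n : ℝ) := by exact_mod_cast hn
  rw [hconst, hcast] at h0row
  nlinarith [mul_pos (by linarith : (0:ℝ) < (n:ℝ) - 1) hapos]
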